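/- Let N_A, N_B ≥ 1, let ψ_0 ∈ ℂ^{Fin N_A × Fin N_B} be a unit vector, let Ψ_ref ∈ ℂ^{N_A} be a unit vector, and let U be a unitary matrix indexed by Fin N_A × Fin N_B. Set ρ_0 = ψ_0 ψ_0†, ρ_ref = Ψ_ref Ψ_ref†, ρ_A = Tr_B(U ρ_0 U†), ρ_B = Tr_A(U ρ_0 U†), J_1 = Re⟨ψ_0, U† (ρ_ref ⊗ ρ_B) U ψ_0⟩ (where ⊗ is the Kronecker product of matrices, indexed compatibly by Fin N_A × Fin N_B), and J_2 = Re⟨Ψ_ref, ρ_A Ψ_ref⟩. Then J_1 = 1 and J_2 = 1 hold if and only if there exist a unit vector ψ_B ∈ ℂ^{N_B} and a complex number c with |c| = 1 such that U ψ_0 = c · (Ψ_ref ⊗ ψ_B). -/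

import Mathlib

open Matrix
open scoped Kronecker

/-- The partial trace over the second tensor factor `B`:
`(Tr_B M)_{a,a'} = ∑_b M_{(a,b),(a',b)}`. -/
noncomputable def traceB {NA NB : ℕ} (M : Matrix (Fin NA × Fin NB) (Fin NA × Fin NB) ℂ) :
    Matrix (Fin NA) (Fin NA) ℂ :=
  fun a a' => ∑ b : Fin NB, M (a, b) (a', b)

/-- The partial trace over the first tensor factor `A`:
`(Tr_A M)_{b,b'} = ∑_a M_{(a,b),(a,b')}`. -/
noncomputable def traceA {NA NB : ℕ} (M : Matrix (Fin NA × Fin NB) (Fin NA × Fin NB) ℂ) :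
    Matrix (Fin NB) (Fin NB) ℂ :=
  fun b b' => ∑ a : Fin NA, M (a, b) (a, b')

/-- The tensor (Kronecker) product of vectors: `(x ⊗ y)(a,b) = x a * y b`. -/
def tensorVec {NA NB : ℕ} (x : Fin NA → ℂ) (y : Fin NB → ℂ) :
    Fin NA × Fin NB → ℂ :=
  fun p => x p.1 * y p.2

lemma aux_vmv {n : Type*} [Fintype n] (v w x : n → ℂ) :
    (vecMulVec v w) *ᵥ x = (w ⬝ᵥ x) • v := by
  ext i
  simp only [vecMulVec_apply, mulVec, dotProduct, Pi.smul_apply, smul_eq_mul, Finset.sum_mul]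
  exact Finset.sum_congr rfl fun j _ => by ring

lemma aux_conj {n : Type*} [Fintype n] (A : Matrix n n ℂ) (x y : n → ℂ) :
    star x ⬝ᵥ (Aᴴ *ᵥ y) = star (A *ᵥ x) ⬝ᵥ y := by
  rw [Matrix.star_mulVec, Matrix.dotProduct_mulVec]

lemma aux_M {n : Type*} [Fintype n] (U : Matrix n n ℂ) (x : n → ℂ) :
    U * vecMulVec x (star x) * Uᴴ = vecMulVec (U *ᵥ x) (star (U *ᵥ x)) := by
  ext p q
  simp only [Matrix.mul_apply, vecMulVec_apply, conjTranspose_apply, mulVec, dotProduct,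
    Pi.star_apply, Finset.sum_mul, Finset.mul_sum, RCLike.star_def, map_sum, _root_.map_mul]
  refine Finset.sum_congr rfl fun j _ => Finset.sum_congr rfl fun k _ => by ring

lemma aux_dot_normSq {n : Type*} [Fintype n] (x : n → ℂ) :
    star x ⬝ᵥ x = ((∑ i, Complex.normSq (x i) : ℝ) : ℂ) := by
  push_cast
  simp only [dotProduct, Pi.star_apply, RCLike.star_def]
  exact Finset.sum_congr rfl fun i _ => (Complex.normSq_eq_conj_mul_self).symm

/-- The general J₂ formula. -/
lemma aux_J2 {NA NB : ℕ} (φ : Fin NA × Fin NB → ℂ) (Ψ : Fin NA → ℂ) :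
    star Ψ ⬝ᵥ (traceB (vecMulVec φ (star φ))) *ᵥ Ψ =
      ∑ b : Fin NB, (Complex.normSq (∑ a, (starRingEnd ℂ) (Ψ a) * φ (a, b)) : ℂ) := by
  set v : Fin NB → ℂ := fun b => ∑ a, (starRingEnd ℂ) (Ψ a) * φ (a, b) with hv
  have h1 : (traceB (vecMulVec φ (star φ))) *ᵥ Ψ
      = fun a => ∑ b, φ (a, b) * (starRingEnd ℂ) (v b) := by
    funext a
    simp only [mulVec, dotProduct, traceB, vecMulVec_apply, Pi.star_apply, RCLike.star_def,
      Finset.sum_mul, hv, map_sum, _root_.map_mul, Complex.conj_conj, Finset.mul_sum]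
    rw [Finset.sum_comm]
    refine Finset.sum_congr rfl fun b _ => Finset.sum_congr rfl fun a' _ => by ring
  rw [h1]
  simp only [dotProduct, Pi.star_apply, RCLike.star_def, Finset.mul_sum]
  rw [Finset.sum_comm]
  refine Finset.sum_congr rfl fun b _ => ?_
  rw [show ∑ a, (starRingEnd ℂ) (Ψ a) * (φ (a, b) * (starRingEnd ℂ) (v b))
      = v b * (starRingEnd ℂ) (v b) by
    rw [hv, Finset.sum_mul]; exact Finset.sum_congr rfl fun a _ => by ring]
  exact Complex.mul_conj _

/-- With `ρ_0 = ψ_0 ψ_0†`, `ρ_ref = Ψ_ref Ψ_ref†`,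
`ρ_A = Tr_B (U ρ_0 U†)`, `ρ_B = Tr_A (U ρ_0 U†)`,
`J_1 = Re⟨ψ_0, U† (ρ_ref ⊗ ρ_B) U ψ_0⟩` and `J_2 = Re⟨Ψ_ref, ρ_A Ψ_ref⟩`, one has
`J_1 = 1 ∧ J_2 = 1` iff `U ψ_0 = c • (Ψ_ref ⊗ ψ_B)` for some unit vector `ψ_B` and some
`c : ℂ` with `|c| = 1` (i.e. `U` disentangles `ψ_0` with trash state `Ψ_ref`). -/
theorem perfect_fidelity_iff_disentangles
    (NA NB : ℕ) (hNA : 1 ≤ NA) (hNB : 1 ≤ NB)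
    (ψ0 : Fin NA × Fin NB → ℂ) (hψ0 : star ψ0 ⬝ᵥ ψ0 = 1)
    (Ψref : Fin NA → ℂ) (href : star Ψref ⬝ᵥ Ψref = 1)
    (U : Matrix (Fin NA × Fin NB) (Fin NA × Fin NB) ℂ)
    (hU1 : U * Uᴴ = 1) (hU2 : Uᴴ * U = 1) :
    ((star ψ0 ⬝ᵥ
        (Uᴴ * (vecMulVec Ψref (star Ψref) ⊗ₖ
                traceA (U * vecMulVec ψ0 (star ψ0) * Uᴴ)) * U) *ᵥ ψ0).re = 1 ∧
     (star Ψref ⬝ᵥ (traceB (U * vecMulVec ψ0 (star ψ0) * Uᴴ)) *ᵥ Ψref).re = 1)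
    ↔ ∃ (ψB : Fin NB → ℂ) (c : ℂ), star ψB ⬝ᵥ ψB = 1 ∧ ‖c‖ = 1 ∧
        U *ᵥ ψ0 = c • tensorVec Ψref ψB := by
  have hrefs : ∑ a, (starRingEnd ℂ) (Ψref a) * Ψref a = 1 := by
    simpa [dotProduct] using href
  constructor
  · rintro ⟨-, h2⟩
    set φ : Fin NA × Fin NB → ℂ := U *ᵥ ψ0 with hφdef
    set v : Fin NB → ℂ := fun b => ∑ a, (starRingEnd ℂ) (Ψref a) * φ (a, b) with hvdef
    rw [aux_M, aux_J2] at h2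
    have h2' : ∑ b, Complex.normSq (v b) = 1 := by
      rw [← Complex.ofReal_sum] at h2
      simpa using h2
    have hφ : star φ ⬝ᵥ φ = 1 := by
      rw [hφdef, ← aux_conj, mulVec_mulVec, hU2, one_mulVec, hψ0]
    have hφn : ∑ p, Complex.normSq (φ p) = 1 := by
      rw [aux_dot_normSq] at hφ
      exact_mod_cast hφ
    have key : ∀ b, ∑ a, Complex.normSq (φ (a, b) - v b * Ψref a)
        = (∑ a, Complex.normSq (φ (a, b))) - Complex.normSq (v b) := by
      intro b
      have e2 : ∑ a, (starRingEnd ℂ) (φ (a, b)) * Ψref a = (starRingEnd ℂ) (v b) := by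
        rw [hvdef, map_sum]
        exact Finset.sum_congr rfl fun a _ => by
          simp only [_root_.map_mul, Complex.conj_conj]; ring
      have hc : ∑ a, ((starRingEnd ℂ) (φ (a, b) - v b * Ψref a)) * (φ (a, b) - v b * Ψref a)
          = (∑ a, (starRingEnd ℂ) (φ (a, b)) * φ (a, b)) - (starRingEnd ℂ) (v b) * v b := by
        calc ∑ a, ((starRingEnd ℂ) (φ (a, b) - v b * Ψref a)) * (φ (a, b) - v b * Ψref a)
            = ∑ a, ((starRingEnd ℂ) (φ (a, b)) * φ (a, b)
                - v b * ((starRingEnd ℂ) (φ (a, b)) * Ψref a)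
                - (starRingEnd ℂ) (v b) * ((starRingEnd ℂ) (Ψref a) * φ (a, b))
                + ((starRingEnd ℂ) (v b) * v b) * ((starRingEnd ℂ) (Ψref a) * Ψref a)) :=
              Finset.sum_congr rfl fun a _ => by
                simp only [map_sub, _root_.map_mul]; ring
          _ = _ := by
              rw [Finset.sum_add_distrib, Finset.sum_sub_distrib, Finset.sum_sub_distrib,
                ← Finset.mul_sum, ← Finset.mul_sum, ← Finset.mul_sum, e2, hrefs]
              rw [hvdef]
              ring
      have : ((∑ a, Complex.normSq (φ (a, b) - v b * Ψref a) : ℝ) : ℂ)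
          = (((∑ a, Complex.normSq (φ (a, b))) - Complex.normSq (v b) : ℝ) : ℂ) := by
        push_cast
        simp only [Complex.normSq_eq_conj_mul_self]
        exact hc
      exact_mod_cast this
    have hsum0 : ∑ b, ∑ a, Complex.normSq (φ (a, b) - v b * Ψref a) = 0 := by
      calc ∑ b, ∑ a, Complex.normSq (φ (a, b) - v b * Ψref a)
          = ∑ b, ((∑ a, Complex.normSq (φ (a, b))) - Complex.normSq (v b)) :=
            Finset.sum_congr rfl fun b _ => key b
        _ = (∑ b, ∑ a, Complex.normSq (φ (a, b))) - ∑ b, Complex.normSq (v b) :=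
            Finset.sum_sub_distrib _ _
        _ = 0 := by
            have hsplit : ∑ b, ∑ a, Complex.normSq (φ (a, b)) = 1 := by
              rw [← hφn, Fintype.sum_prod_type]; exact Finset.sum_comm
            rw [hsplit, h2']; ring
    have hzero : ∀ b a, φ (a, b) = v b * Ψref a := by
      intro b a
      have hb := (Finset.sum_eq_zero_iff_of_nonneg
        (fun b _ => Finset.sum_nonneg fun a _ => Complex.normSq_nonneg _)).mp hsum0 b
        (Finset.mem_univ b)
      have ha := (Finset.sum_eq_zero_iff_of_nonneg
        (fun a _ => Complex.normSq_nonneg _)).mp hb a (Finset.mem_univ a)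
      exact sub_eq_zero.mp (Complex.normSq_eq_zero.mp ha)
    refine ⟨v, 1, ?_, by simp, ?_⟩
    · rw [aux_dot_normSq, h2']; norm_num
    · funext p
      have := hzero p.2 p.1
      simp only [Pi.smul_apply, smul_eq_mul, one_mul, tensorVec]
      rw [show ((p.1 : Fin NA), (p.2 : Fin NB)) = p from rfl] at this
      rw [this]; ring
  · rintro ⟨ψB, c, hB, hc, hUψ⟩
    have hcc : (starRingEnd ℂ) c * c = 1 := by
      rw [← Complex.normSq_eq_conj_mul_self, Complex.normSq_eq_norm_sq, hc]; norm_num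
    have hBn : ∑ b, Complex.normSq (ψB b) = 1 := by
      rw [aux_dot_normSq] at hB; exact_mod_cast hB
    have htA : traceA (U * vecMulVec ψ0 (star ψ0) * Uᴴ) = vecMulVec ψB (star ψB) := by
      rw [aux_M, hUψ]
      ext b b'
      simp only [traceA, vecMulVec_apply, Pi.star_apply, Pi.smul_apply, smul_eq_mul, tensorVec,
        RCLike.star_def, _root_.map_mul]
      calc ∑ a : Fin NA, c * (Ψref a * ψB b) *
            ((starRingEnd ℂ) c * ((starRingEnd ℂ) (Ψref a) * (starRingEnd ℂ) (ψB b')))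
          = (∑ a, (starRingEnd ℂ) (Ψref a) * Ψref a) *
              (((starRingEnd ℂ) c * c) * (ψB b * (starRingEnd ℂ) (ψB b'))) := by
            rw [Finset.sum_mul]; exact Finset.sum_congr rfl fun a _ => by ring
        _ = ψB b * (starRingEnd ℂ) (ψB b') := by rw [hrefs, hcc]; ring
    have hK : vecMulVec Ψref (star Ψref) ⊗ₖ vecMulVec ψB (star ψB)
        = vecMulVec (tensorVec Ψref ψB) (star (tensorVec Ψref ψB)) := by
      ext p q
      simp only [kroneckerMap_apply, vecMulVec_apply, Pi.star_apply, tensorVec,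
        RCLike.star_def, _root_.map_mul]
      ring
    have ht : star (tensorVec Ψref ψB) ⬝ᵥ (tensorVec Ψref ψB) = 1 := by
      have h : star (tensorVec Ψref ψB) ⬝ᵥ (tensorVec Ψref ψB)
          = (star Ψref ⬝ᵥ Ψref) * (star ψB ⬝ᵥ ψB) := by
        simp only [dotProduct, tensorVec, Pi.star_apply, RCLike.star_def, _root_.map_mul,
          Fintype.sum_prod_type, Finset.sum_mul, Finset.mul_sum]
        rw [Finset.sum_comm]
        exact Finset.sum_congr rfl fun b _ => Finset.sum_congr rfl fun a _ => by ring
      rw [h, href, hB, one_mul]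
    constructor
    · rw [htA, hK, mul_assoc, ← mulVec_mulVec, ← mulVec_mulVec, aux_conj, hUψ,
        aux_vmv, dotProduct_smul, smul_eq_mul, dotProduct_smul, smul_eq_mul, ht,
        star_smul, smul_dotProduct, smul_eq_mul, ht]
      simp only [RCLike.star_def, mul_one]
      rw [mul_comm, hcc, Complex.one_re]
    · rw [aux_M, aux_J2, hUψ]
      have hv : ∀ b : Fin NB,
          ∑ a, (starRingEnd ℂ) (Ψref a) * ((c • tensorVec Ψref ψB) (a, b)) = c * ψB b := by
        intro b
        calc ∑ a, (starRingEnd ℂ) (Ψref a) * ((c • tensorVec Ψref ψB) (a, b))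
            = (∑ a, (starRingEnd ℂ) (Ψref a) * Ψref a) * (c * ψB b) := by
              rw [Finset.sum_mul]
              exact Finset.sum_congr rfl fun a _ => by
                simp only [Pi.smul_apply, smul_eq_mul, tensorVec]; ring
          _ = c * ψB b := by rw [hrefs, one_mul]
      have hnc : Complex.normSq c = 1 := by rw [Complex.normSq_eq_norm_sq, hc]; norm_num
      simp only [hv]
      rw [← Complex.ofReal_sum]
      simp [Complex.normSq_mul, hnc, hBn, ← Finset.mul_sum]
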